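/- In the on-chain-verified audit game, assume (i) S_a > ((1 − p_a)/p_a)·R_a + c_a/(ε·p_a), (ii) R_a > c_a/(1 − ε), and (iii) R_s > c_s, and suppose all SPs other than i play the honest strategy σ^h. Then for every strategy σ_i of SP i with s_i = 0, the strategy σ_i' obtained from σ_i by changing only s_i to 1 satisfies u_i(σ_i', σ^h_{−i}) = u_i(σ_i, σ^h_{−i}) + R_s − c_s > u_i(σ_i, σ^h_{−i}); i.e. storing is a strictly better response than not storing. -/

import Mathlib

/-!
On-chain-verified audit game: `N ≥ 3` storage providers (SPs), parameters
`R_s > 0` (storage reward), `R_a > 0` (per-audit reward), `c_s > 0` (storage cost),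
`c_a > 0` (audit cost), `S_a ≥ 0` (slashing penalty), `p_a ∈ (0,1]` (inspection
probability), `ε ∈ (0,1)` (noise). A pure strategy of SP `i` is a triple `(s, a, ρ)`:
a storage bit, audit bits for each other SP, and reporting policies `ρ j : Bool → Bool`
(report as a function of having received a valid proof).
-/

open Finset

/-- A pure strategy of storage provider `i` in the on-chain-verified audit game. -/
structure Strat (N : ℕ) (i : Fin N) where
  /-- whether `i` stores its assigned data -/
  s : Bool
  /-- whether `i` audits SP `j` (at cost `c_a`) -/
  a : {j : Fin N // j ≠ i} → Bool
  /-- `i`'s reporting policy about `j`, as a function of whether a valid proof was received -/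
  ρ : {j : Fin N // j ≠ i} → Bool → Bool

/-- Numerical value of a Boolean choice. -/
def b01 (b : Bool) : ℝ := if b then 1 else 0

/-- Expected audit payoff of the auditor from one ordered pair `(i,j)`, where `sj` is the
auditee's storage bit, `a` the auditor's audit bit, and `ρ` the auditor's reporting policy.
The backing probability is `β = 1 − ε` if the auditee stores and `0` otherwise; an unbacked
✓ report earns `(1 − p_a)·R_a − p_a·S_a` in expectation. -/
noncomputable def pairPayoff (Ra ca Sa pa ε : ℝ) (sj a : Bool) (ρ : Bool → Bool) : ℝ :=
  let β : ℝ := if sj then 1 - ε else 0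
  let F : ℝ := (1 - pa) * Ra - pa * Sa
  if a then β * b01 (ρ true) * Ra + (1 - β) * b01 (ρ false) * F - ca
  else b01 (ρ false) * (β * Ra + (1 - β) * F)

/-- The deterministic report of `i` about `j`: `r_i^j = ρ_i^j (a_i^j · s_j)`. -/
def report {N : ℕ} (σ : ∀ i : Fin N, Strat N i) (i : Fin N) (j : {j : Fin N // j ≠ i}) : Bool :=
  (σ i).ρ j ((σ i).a j && (σ j.1).s)

/-- Number of SPs `j ≠ i` whose deterministic report about `i` is ✓. -/
def trueReports {N : ℕ} (σ : ∀ i : Fin N, Strat N i) (i : Fin N) : ℕ :=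
  (univ.filter fun j : {j : Fin N // j ≠ i} => report σ j.1 ⟨i, Ne.symm j.2⟩ = true).card

/-- Total (expected) utility of SP `i`:
`u_i(σ) = R_s·1[|{j ≠ i : r_j^i = 1}| > N/2] − c_s·s_i + Σ_{j≠i} pairPayoff(i,j)`. -/
noncomputable def U {N : ℕ} (Rs Ra cs ca Sa pa ε : ℝ) (σ : ∀ i : Fin N, Strat N i)
    (i : Fin N) : ℝ :=
  Rs * (if (N : ℝ) / 2 < (trueReports σ i : ℝ) then 1 else 0)
    - cs * b01 (σ i).s
    + ∑ j : {j : Fin N // j ≠ i}, pairPayoff Ra ca Sa pa ε (σ j.1).s ((σ i).a j) ((σ i).ρ j)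

/-- Pure Nash equilibrium: no SP can strictly increase its own utility by unilaterally
changing its strategy. -/
def IsNashEq {N : ℕ} (Rs Ra cs ca Sa pa ε : ℝ) (σ : ∀ i : Fin N, Strat N i) : Prop :=
  ∀ (i : Fin N) (τ : Strat N i),
    U Rs Ra cs ca Sa pa ε (Function.update σ i τ) i ≤ U Rs Ra cs ca Sa pa ε σ i

/-- The honest strategy profile: store, audit everyone, report ✓ iff a valid proof
was received. -/
def honest (N : ℕ) : ∀ i : Fin N, Strat N i :=
  fun _ => ⟨true, fun _ => true, fun _ b => b⟩

/-- The fully dishonest strategy profile: don't store, don't audit, always report ✓. -/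
def dishonest (N : ℕ) : ∀ i : Fin N, Strat N i :=
  fun _ => ⟨false, fun _ => false, fun _ _ => true⟩

/-- Under the strict conditions (i) `S_a > ((1 − p_a)/p_a)·R_a + c_a/(ε·p_a)`,
(ii) `R_a > c_a/(1 − ε)`, (iii) `R_s > c_s`, if all SPs other than `i` play the honest
strategy, then for every strategy `τ` of SP `i` with `s_i = 0`, switching only its storage
bit to `1` raises `i`'s utility by exactly `R_s − c_s > 0`; i.e. storing is a strictly
better response than not storing. -/
theorem storing_strictly_better_response
    (N : ℕ) (hN : 3 ≤ N) (Rs Ra cs ca Sa pa ε : ℝ)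
    (hRs : 0 < Rs) (hRa : 0 < Ra) (hcs : 0 < cs) (hca : 0 < ca) (hSa : 0 ≤ Sa)
    (hpa0 : 0 < pa) (hpa1 : pa ≤ 1) (hε0 : 0 < ε) (hε1 : ε < 1)
    (h1 : ((1 - pa) / pa) * Ra + ca / (ε * pa) < Sa)
    (h2 : ca / (1 - ε) < Ra)
    (h3 : cs < Rs)
    (i : Fin N) (τ : Strat N i) (hτ : τ.s = false) :
    U Rs Ra cs ca Sa pa ε (Function.update (honest N) i ⟨true, τ.a, τ.ρ⟩) i
        = U Rs Ra cs ca Sa pa ε (Function.update (honest N) i τ) i + Rs - cs ∧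
    U Rs Ra cs ca Sa pa ε (Function.update (honest N) i τ) i
        < U Rs Ra cs ca Sa pa ε (Function.update (honest N) i ⟨true, τ.a, τ.ρ⟩) i := by

  classical
  set τ' : Strat N i := ⟨true, τ.a, τ.ρ⟩ with hτ'
  set σ1 := Function.update (honest N) i τ' with hσ1
  set σ0 := Function.update (honest N) i τ with hσ0
  have hσ1i : σ1 i = τ' := Function.update_self _ _ _
  have hσ0i : σ0 i = τ := Function.update_self _ _ _
  have hσ1j : ∀ j : {j : Fin N // j ≠ i}, σ1 j.1 = honest N j.1 :=
    fun j => Function.update_of_ne j.2 _ _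
  have hσ0j : ∀ j : {j : Fin N // j ≠ i}, σ0 j.1 = honest N j.1 :=
    fun j => Function.update_of_ne j.2 _ _
  -- reports about i
  have hrep1 : ∀ j : {j : Fin N // j ≠ i}, report σ1 j.1 ⟨i, Ne.symm j.2⟩ = true := by
    intro j
    simp [report, hσ1j j, hσ1i, honest, hτ']
  have hrep0 : ∀ j : {j : Fin N // j ≠ i}, report σ0 j.1 ⟨i, Ne.symm j.2⟩ = false := by
    intro j
    simp [report, hσ0j j, hσ0i, honest, hτ]
  have hcard : Fintype.card {j : Fin N // j ≠ i} = N - 1 := by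
    have := Fintype.card_subtype_compl (fun j : Fin N => j = i)
    simpa [Fintype.card_subtype_eq] using this
  have htr1 : trueReports σ1 i = N - 1 := by
    rw [trueReports]
    rw [Finset.filter_true_of_mem (fun j _ => hrep1 j)]
    simpa using hcard
  have htr0 : trueReports σ0 i = 0 := by
    rw [trueReports]
    rw [Finset.filter_false_of_mem (fun j _ => by simp [hrep0 j])]
    simp
  have hind1 : (if (N : ℝ) / 2 < (trueReports σ1 i : ℝ) then (1:ℝ) else 0) = 1 := by
    rw [htr1, if_pos]
    have hN3 : (3:ℝ) ≤ (N:ℝ) := by exact_mod_cast hN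
    have : ((N - 1 : ℕ) : ℝ) = (N:ℝ) - 1 := by
      have : 1 ≤ N := by omega
      push_cast [this]; ring
    rw [this]; linarith
  have hind0 : (if (N : ℝ) / 2 < (trueReports σ0 i : ℝ) then (1:ℝ) else 0) = 0 := by
    rw [htr0, if_neg]
    have hN0 : (0:ℝ) ≤ (N:ℝ) := by positivity
    push_cast; linarith
  have hsum : ∀ j : {j : Fin N // j ≠ i},
      pairPayoff Ra ca Sa pa ε (σ1 j.1).s ((σ1 i).a j) ((σ1 i).ρ j)
        = pairPayoff Ra ca Sa pa ε (σ0 j.1).s ((σ0 i).a j) ((σ0 i).ρ j) := by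
    intro j
    rw [hσ1j j, hσ0j j, hσ1i, hσ0i]
  have hsum' : ∀ j : {j : Fin N // j ≠ i},
      pairPayoff Ra ca Sa pa ε (σ1 j.1).s (τ'.a j) (τ'.ρ j)
        = pairPayoff Ra ca Sa pa ε (σ0 j.1).s (τ.a j) (τ.ρ j) :=
    fun j => by rw [hσ1j j, hσ0j j]
  have hU : U Rs Ra cs ca Sa pa ε σ1 i = U Rs Ra cs ca Sa pa ε σ0 i + Rs - cs := by
    rw [U, U, hind1, hind0, hσ1i, hσ0i]
    rw [Finset.sum_congr rfl (fun j _ => hsum' j)]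
    simp [b01, hτ, hτ']
    ring
  exact ⟨hU, by rw [hU]; linarith⟩
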